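/- There exists a 3×3 matrix A with strictly positive entries and vectors b, b* with strictly positive entries such that the solutions α of Aᵀ α = b and β of A β = b* each have at least one strictly negative coordinate, yet for every pair of distinct columns (j,j') of A, the ratio b_j/b_{j'} lies strictly between min_i A_{ij}/A_{ij'} and max_i A_{ij}/A_{ij'}, and similarly for every pair of distinct rows (i,i'), b*_i/b*_{i'} lies strictly between min_j A_{ij}/A_{i'j} and max_j A_{ij}/A_{i'j}. -/

import Mathlib

open Matrix

theorem sufficient_not_necessary :
    ∃ (A : Matrix (Fin 3) (Fin 3) ℝ) (b bs α β : Fin 3 → ℝ),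
      (∀ i j, 0 < A i j) ∧ (∀ j, 0 < b j) ∧ (∀ i, 0 < bs i) ∧
      Aᵀ *ᵥ α = b ∧ A *ᵥ β = bs ∧
      (∃ i, α i < 0) ∧ (∃ j, β j < 0) ∧
      (∀ j j' : Fin 3, j ≠ j' →
        Finset.univ.inf' Finset.univ_nonempty (fun i => A i j / A i j') < b j / b j' ∧
        b j / b j' < Finset.univ.sup' Finset.univ_nonempty (fun i => A i j / A i j')) ∧
      (∀ i i' : Fin 3, i ≠ i' →
        Finset.univ.inf' Finset.univ_nonempty (fun j => A i j / A i' j) < bs i / bs i' ∧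
        bs i / bs i' < Finset.univ.sup' Finset.univ_nonempty (fun j => A i j / A i' j)) := by
  refine ⟨!![621,290,284;260,131,117;93,30,18],
    ![456,156,125], ![135,60,20],
    ![11759/17986, -28466/26979, 564521/161874],
    ![500/3519, 2315/7038, -1205/7038], ?_, ?_, ?_, ?_, ?_, ?_, ?_, ?_, ?_⟩
  · intro i j; fin_cases i <;> fin_cases j <;> norm_num
  · intro j; fin_cases j <;> norm_num
  · intro i; fin_cases i <;> norm_num
  · funext i; fin_cases i <;>
      simp [Matrix.mulVec, Matrix.transpose, dotProduct, Fin.sum_univ_three] <;> norm_num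
  · funext i; fin_cases i <;>
      simp [Matrix.mulVec, dotProduct, Fin.sum_univ_three] <;> norm_num
  · exact ⟨1, by norm_num⟩
  · exact ⟨2, by norm_num [Matrix.cons_val_two]⟩
  · intro j j' h
    fin_cases j <;> fin_cases j' <;> simp only [ne_eq, not_true] at h ⊢
    · exact ⟨(Finset.inf'_lt_iff _).mpr ⟨0, Finset.mem_univ _, by norm_num⟩,
        (Finset.lt_sup'_iff _).mpr ⟨2, Finset.mem_univ _, by norm_num [Matrix.cons_val_two]⟩⟩
    · exact ⟨(Finset.inf'_lt_iff _).mpr ⟨0, Finset.mem_univ _, by norm_num⟩,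
        (Finset.lt_sup'_iff _).mpr ⟨2, Finset.mem_univ _, by norm_num [Matrix.cons_val_two]⟩⟩
    · exact ⟨(Finset.inf'_lt_iff _).mpr ⟨2, Finset.mem_univ _, by norm_num [Matrix.cons_val_two]⟩,
        (Finset.lt_sup'_iff _).mpr ⟨0, Finset.mem_univ _, by norm_num⟩⟩
    · exact ⟨(Finset.inf'_lt_iff _).mpr ⟨0, Finset.mem_univ _, by norm_num⟩,
        (Finset.lt_sup'_iff _).mpr ⟨2, Finset.mem_univ _, by norm_num [Matrix.cons_val_two]⟩⟩
    · exact ⟨(Finset.inf'_lt_iff _).mpr ⟨2, Finset.mem_univ _, by norm_num [Matrix.cons_val_two]⟩,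
        (Finset.lt_sup'_iff _).mpr ⟨0, Finset.mem_univ _, by norm_num⟩⟩
    · exact ⟨(Finset.inf'_lt_iff _).mpr ⟨2, Finset.mem_univ _, by norm_num [Matrix.cons_val_two]⟩,
        (Finset.lt_sup'_iff _).mpr ⟨0, Finset.mem_univ _, by norm_num⟩⟩
  · intro i i' h
    fin_cases i <;> fin_cases i' <;> simp only [ne_eq, not_true] at h ⊢
    · exact ⟨(Finset.inf'_lt_iff _).mpr ⟨1, Finset.mem_univ _, by norm_num⟩,
        (Finset.lt_sup'_iff _).mpr ⟨0, Finset.mem_univ _, by norm_num⟩⟩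
    · exact ⟨(Finset.inf'_lt_iff _).mpr ⟨0, Finset.mem_univ _, by norm_num⟩,
        (Finset.lt_sup'_iff _).mpr ⟨1, Finset.mem_univ _, by norm_num⟩⟩
    · exact ⟨(Finset.inf'_lt_iff _).mpr ⟨0, Finset.mem_univ _, by norm_num⟩,
        (Finset.lt_sup'_iff _).mpr ⟨1, Finset.mem_univ _, by norm_num⟩⟩
    · exact ⟨(Finset.inf'_lt_iff _).mpr ⟨0, Finset.mem_univ _, by norm_num⟩,
        (Finset.lt_sup'_iff _).mpr ⟨1, Finset.mem_univ _, by norm_num⟩⟩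
    · exact ⟨(Finset.inf'_lt_iff _).mpr ⟨1, Finset.mem_univ _, by norm_num⟩,
        (Finset.lt_sup'_iff _).mpr ⟨0, Finset.mem_univ _, by norm_num⟩⟩
    · exact ⟨(Finset.inf'_lt_iff _).mpr ⟨1, Finset.mem_univ _, by norm_num⟩,
        (Finset.lt_sup'_iff _).mpr ⟨0, Finset.mem_univ _, by norm_num⟩⟩
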